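/- Let ω, c ∈ ℝ and ζ ∈ ℂ. Let R, θ : ℝ → ℝ be twice continuously differentiable with R(x) > 0 and θ'(x) = c/R(x)² for all x, set φ(x) = R(x)e^{iθ(x)}, and assume φ satisfies the stationary focusing NLS equation ωφ = −(1/2)φ'' − |φ|²φ. Set A(x) = −iζ² + (i/2)|φ(x)|² + (i/2)ω, B(x) = ζφ(x) + (i/2)φ'(x), C(x) = −ζ·conj(φ(x)) + (i/2)·conj(φ)'(x). Let χ = (χ₁, χ₂) : ℝ × ℝ → ℂ² be twice continuously differentiable and satisfy the Lax pair ∂ₓχ₁ = −iζχ₁ + φχ₂, ∂ₓχ₂ = −conj(φ)χ₁ + iζχ₂, ∂ₜχ₁ = Aχ₁ + Bχ₂, ∂ₜχ₂ = Cχ₁ − Aχ₂. Then the functions u(x,t) = e^{−iθ(x)}χ₁(x,t)² − e^{iθ(x)}χ₂(x,t)² and v(x,t) = −i e^{−iθ(x)}χ₁(x,t)² − i e^{iθ(x)}χ₂(x,t)² satisfy the linearized focusing NLS system ∂ₜu = −S u + L₋ v and ∂ₜv = −L₊ u − S v, where (L₋ w)(x) = −(1/2)∂ₓ²w − R(x)²w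 − ωw + (c²/(2R(x)⁴))w, (L₊ w)(x) = −(1/2)∂ₓ²w − 3R(x)²w − ωw + (c²/(2R(x)⁴))w, and (S w)(x) = (c/R(x)²)∂ₓw − (cR'(x)/R(x)³)w. -/

import Mathlib

set_option maxHeartbeats 1600000
private lemma sq_eig_key (i e f r p T Tp S2 S4 w z a b : ℂ)
    (hi : i * i = -1) (hef : e * f = 1) (hTp : Tp * r = -(2 * (T * p)))
    (hS2 : S2 * r = T * p) (hS4 : 2 * S4 = T * T) (hr : r ≠ 0) (he : e ≠ 0) :
    ((-1) * f * S2 * a^2 + e * S2 * b^2 + 4 * e * f * r * z * a * b + 4 * e * f * r * T * a * b + (-2) * i * f * z^2 * a^2 + i * f * S4 * a^2 + (-2) * i * f * T * z * a^2 + (-1) * i * f * T^2 * a^2 + (-2) * i * e * z^2 * b^2 + i * e * S4 * b^2 + (-2) * i * e * T * z * b^2 + (-1) * i * e * T^2 * b^2 + (1/2) * i^2 * f * Tp * a^2 + (-1/2) * i^2 * e * Tp * b^2 + 4 * i^2 * e * f * r * z * a * b + 4 * i^2 * e * f * r * T * a * b + (-2) * i^3 * f * z^2 * a^2 + (-2)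 * i^3 * f * T * z * a^2 + (-1/2) * i^3 * f * T^2 * a^2 + (-2) * i^3 * e * z^2 * b^2 + (-2) * i^3 * e * T * z * b^2 + (-1/2) * i^3 * e * T^2 * b^2) = 0 ∧ ((-1) * f * w * a^2 + f * S4 * a^2 + (-3) * f * r^2 * a^2 + e * w * b^2 + (-1) * e * S4 * b^2 + 3 * e * r^2 * b^2 + (-2) * e * f * p * a * b + 2 * e * f^2 * r^2 * a^2 + (-2) * e^2 * f * r^2 * b^2 + i * f * S2 * a^2 + (1/2) * i * f * Tp * a^2 + i * e * S2 * b^2 + (1/2) * i * e * Tp * b^2 + (-1) * i^2 * f * w * a^2 + (1/2) * i^2 * f * T^2 * a^2 + (-1) * i^2 * f * r^2 * a^2 + i^2 * e * w * b^2 + (-1/2) * i^2 * e * T^2 * b^2 + i^2 * e * r^2 * b^2 + (-2) * i^2 * e * f * p * a * b) = 0 := by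
  constructor
  · refine mul_left_cancel₀ (mul_ne_zero he hr) ?_
    linear_combination ((-1) * p * T * a^2 + 4 * e * r^2 * z * a * b + 4 * e * r^2 * T * a * b + e^2 * p * T * b^2 + (-2) * i * r * z^2 * a^2 + (-2) * i * r * T * z * a^2 + (-1/2) * i * r * T^2 * a^2 + (-2) * i * e^2 * r * z^2 * b^2 + (-2) * i * e^2 * r * T * z * b^2 + (-1/2) * i * e^2 * r * T^2 * b^2) * hi + ((-1) * p * T * a^2 + 4 * e * r^2 * z * a * b + 4 * e * r^2 * T * a * b + (-2) * i * r * z^2 * a^2 + (-2) * i * r * T * z * a^2 + (-1/2) * i * r * T^2 * a^2 + (-1) * i^2 * p * T * a^2 + 4 * i^2 * e * r^2 * z * a * b + 4 * i^2 * e * r^2 * T * a * b + (-2) * i^3 * r * z^2 * a^2 + (-2) * i^3 * r * T * z * a^2 + (-1/2) * i^3 * r * T^2 * a^2) * hef + ((1/2) * i^2 * e * f * a^2 + (-1/2) * i^2 * e^2 * b^2) * hTp + ((-1) * e * f * a^2 + e^2 * b^2) * hS2 + ((1/2) * i * e * f * r * a^2 + (1/2) * i * e^2 * r * b^2) * hS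4
  · refine mul_left_cancel₀ (mul_ne_zero he hr) ?_
    linear_combination ((-1) * r * w * a^2 + (1/2) * r * T^2 * a^2 + (-1) * r^3 * a^2 + (-2) * e * r * p * a * b + e^2 * r * w * b^2 + (-1/2) * e^2 * r * T^2 * b^2 + e^2 * r^3 * b^2) * hi + ((-1) * r * w * a^2 + (1/2) * r * T^2 * a^2 + (-1) * r^3 * a^2 + (-2) * e * r * p * a * b + 2 * e * f * r^3 * a^2 + (-2) * e^2 * r^3 * b^2 + (-1) * i^2 * r * w * a^2 + (1/2) * i^2 * r * T^2 * a^2 + (-1) * i^2 * r^3 * a^2 + (-2) * i^2 * e * r * p * a * b) * hef + ((1/2) * i * e * f * a^2 + (1/2) * i * e^2 * b^2) * hTp + (i * e * f * a^2 + i * e^2 * b^2) * hS2 + ((1/2) * e * f * r * a^2 + (-1/2) * e^2 * r * b^2) * hS4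



/-- Squared eigenfunction connection. If `φ = R e^{iθ}` is a `C²` elliptic
stationary solution of focusing NLS (with `θ' = c/R²`), `A`, `B`, `C` are the entries of
the temporal Lax matrix, and `χ = (χ₁, χ₂)` is a `C²` solution of the Lax pair, then
`u = e^{−iθ}χ₁² − e^{iθ}χ₂²` and `v = −i e^{−iθ}χ₁² − i e^{iθ}χ₂²` satisfy the linearized
focusing NLS system `∂ₜu = −Su + L₋v`, `∂ₜv = −L₊u − Sv`. -/
theorem squared_eigenfunction_connection
    (ω c : ℝ) (ζ : ℂ) (R θ : ℝ → ℝ)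
    (hR : ContDiff ℝ 2 R) (hθ : ContDiff ℝ 2 θ)
    (hRpos : ∀ x : ℝ, 0 < R x)
    (hθ' : ∀ x : ℝ, deriv θ x = c / R x ^ 2)
    (φ : ℝ → ℂ)
    (hφ : ∀ x : ℝ, φ x = ((R x : ℝ) : ℂ) * Complex.exp (Complex.I * ((θ x : ℝ) : ℂ)))
    (hstat : ∀ x : ℝ, (ω : ℂ) * φ x =
      -(1 / 2) * deriv (deriv φ) x - ((‖φ x‖ : ℝ) : ℂ) ^ 2 * φ x)
    (A B C : ℝ → ℂ)
    (hA : ∀ x : ℝ, A x = -Complex.I * ζ ^ 2 +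
      (Complex.I / 2) * ((‖φ x‖ : ℝ) : ℂ) ^ 2 + (Complex.I / 2) * (ω : ℂ))
    (hB : ∀ x : ℝ, B x = ζ * φ x + (Complex.I / 2) * deriv φ x)
    (hC : ∀ x : ℝ, C x = -ζ * (starRingEnd ℂ) (φ x) +
      (Complex.I / 2) * deriv (fun y => (starRingEnd ℂ) (φ y)) x)
    (χ₁ χ₂ : ℝ × ℝ → ℂ)
    (hχ₁ : ContDiff ℝ 2 χ₁) (hχ₂ : ContDiff ℝ 2 χ₂)
    (hx₁ : ∀ x t : ℝ, deriv (fun x' => χ₁ (x', t)) x =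
      -Complex.I * ζ * χ₁ (x, t) + φ x * χ₂ (x, t))
    (hx₂ : ∀ x t : ℝ, deriv (fun x' => χ₂ (x', t)) x =
      -(starRingEnd ℂ) (φ x) * χ₁ (x, t) + Complex.I * ζ * χ₂ (x, t))
    (ht₁ : ∀ x t : ℝ, deriv (fun t' => χ₁ (x, t')) t =
      A x * χ₁ (x, t) + B x * χ₂ (x, t))
    (ht₂ : ∀ x t : ℝ, deriv (fun t' => χ₂ (x, t')) t =
      C x * χ₁ (x, t) - A x * χ₂ (x, t))
    (u v : ℝ → ℝ → ℂ)
    (hu : ∀ x t : ℝ, u x t =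
      Complex.exp (-Complex.I * ((θ x : ℝ) : ℂ)) * χ₁ (x, t) ^ 2
        - Complex.exp (Complex.I * ((θ x : ℝ) : ℂ)) * χ₂ (x, t) ^ 2)
    (hv : ∀ x t : ℝ, v x t =
      -Complex.I * Complex.exp (-Complex.I * ((θ x : ℝ) : ℂ)) * χ₁ (x, t) ^ 2
        - Complex.I * Complex.exp (Complex.I * ((θ x : ℝ) : ℂ)) * χ₂ (x, t) ^ 2) :
    ∀ x t : ℝ,
      (deriv (fun t' => u x t') t =
        -(((c / R x ^ 2 : ℝ) : ℂ) * deriv (fun x' => u x' t) x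
            - ((c * deriv R x / R x ^ 3 : ℝ) : ℂ) * u x t)
          + (-(1 / 2) * deriv (fun x' => deriv (fun y => v y t) x') x
              - ((R x : ℝ) : ℂ) ^ 2 * v x t - (ω : ℂ) * v x t
              + ((c ^ 2 / (2 * R x ^ 4) : ℝ) : ℂ) * v x t))
      ∧ (deriv (fun t' => v x t') t =
        -(-(1 / 2) * deriv (fun x' => deriv (fun y => u y t) x') x
            - 3 * ((R x : ℝ) : ℂ) ^ 2 * u x t - (ω : ℂ) * u x t
            + ((c ^ 2 / (2 * R x ^ 4) : ℝ) : ℂ) * u x t)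
          - (((c / R x ^ 2 : ℝ) : ℂ) * deriv (fun x' => v x' t) x
            - ((c * deriv R x / R x ^ 3 : ℝ) : ℂ) * v x t)) := by
  intro x t
  have h2 : (2 : WithTop ℕ∞) ≠ 0 := by norm_num
  have hRdiff := hR.differentiable h2
  have hθdiff := hθ.differentiable h2
  have hR0 : ∀ y : ℝ, ((R y : ℝ) : ℂ) ≠ 0 := fun y => by
    exact_mod_cast (hRpos y).ne'
  have hR0r : ∀ y : ℝ, R y ≠ 0 := fun y => (hRpos y).ne'
  -- derivative of the coerced modulus
  have hRC : ∀ y : ℝ, HasDerivAt (fun z => ((R z : ℝ) : ℂ)) ((deriv R y : ℝ) : ℂ) y :=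
    fun y => ((hRdiff y).hasDerivAt).ofReal_comp
  -- derivative of the coerced phase
  have hθC : ∀ y : ℝ, HasDerivAt (fun z => ((θ z : ℝ) : ℂ)) ((c / R y ^ 2 : ℝ) : ℂ) y := by
    intro y
    have h1 := (hθdiff y).hasDerivAt
    rw [hθ' y] at h1
    exact h1.ofReal_comp
  -- derivative of e^{iθ}
  have hEd : ∀ y : ℝ, HasDerivAt (fun z => Complex.exp (Complex.I * ((θ z : ℝ) : ℂ)))
      (Complex.exp (Complex.I * ((θ y : ℝ) : ℂ)) * (Complex.I * ((c / R y ^ 2 : ℝ) : ℂ))) y :=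
    fun y => ((hθC y).const_mul Complex.I).cexp
  -- derivative of e^{-iθ}
  have hEmd : ∀ y : ℝ, HasDerivAt (fun z => Complex.exp (-Complex.I * ((θ z : ℝ) : ℂ)))
      (Complex.exp (-Complex.I * ((θ y : ℝ) : ℂ)) * (-Complex.I * ((c / R y ^ 2 : ℝ) : ℂ))) y :=
    fun y => ((hθC y).const_mul (-Complex.I)).cexp
  -- derivative of c/R^2
  have hTd : ∀ y : ℝ, HasDerivAt (fun z => ((c / R z ^ 2 : ℝ) : ℂ))
      ((-(2 * c * deriv R y) / R y ^ 3 : ℝ) : ℂ) y := by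
    intro y
    have H := (hasDerivAt_const y c).div (((hRdiff y).hasDerivAt).pow 2) (pow_ne_zero 2 (hR0r y))
    simp only [Pi.mul_def, Pi.add_def, Pi.sub_def, Pi.neg_def, Pi.div_def, Pi.pow_def] at H
    have H2 : HasDerivAt (fun z => c / R z ^ 2) (-(2 * c * deriv R y) / R y ^ 3) y := by
      refine H.congr_deriv ?_
      have := hR0r y
      field_simp
      ring
    exact H2.ofReal_comp
  -- conjugate of φ
  have hconjpt : ∀ y : ℝ, (starRingEnd ℂ) (φ y)
      = ((R y : ℝ) : ℂ) * Complex.exp (-Complex.I * ((θ y : ℝ) : ℂ)) := by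
    intro y
    rw [hφ y, map_mul, Complex.conj_ofReal, ← Complex.exp_conj, map_mul, Complex.conj_I,
      Complex.conj_ofReal, neg_mul]
  -- modulus of φ
  have habs : ∀ y : ℝ, ‖φ y‖ = R y := by
    intro y
    rw [hφ y, norm_mul, Complex.norm_real, Real.norm_eq_abs, abs_of_pos (hRpos y), mul_comm Complex.I,
      Complex.norm_exp_ofReal_mul_I, mul_one]
  -- derivative of φ
  have hφd : HasDerivAt φ
      (((deriv R x : ℝ) : ℂ) * Complex.exp (Complex.I * ((θ x : ℝ) : ℂ))
        + ((R x : ℝ) : ℂ) * (Complex.exp (Complex.I * ((θ x : ℝ) : ℂ)) * (Complex.I * ((c / R x ^ 2 : ℝ) : ℂ)))) x := by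
    have hfun : φ = fun z => ((R z : ℝ) : ℂ) * Complex.exp (Complex.I * ((θ z : ℝ) : ℂ)) := funext hφ
    rw [hfun]
    exact (hRC x).mul (hEd x)
  -- derivative of conj φ
  have hφcd : HasDerivAt (fun z => (starRingEnd ℂ) (φ z))
      (((deriv R x : ℝ) : ℂ) * Complex.exp (-Complex.I * ((θ x : ℝ) : ℂ))
        + ((R x : ℝ) : ℂ) * (Complex.exp (-Complex.I * ((θ x : ℝ) : ℂ)) * (-Complex.I * ((c / R x ^ 2 : ℝ) : ℂ)))) x := by
    have hfun : (fun z => (starRingEnd ℂ) (φ z))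
        = fun z => ((R z : ℝ) : ℂ) * Complex.exp (-Complex.I * ((θ z : ℝ) : ℂ)) := funext hconjpt
    rw [hfun]
    exact (hRC x).mul (hEmd x)
  -- spatial derivatives of χ
  have hc1xd : ∀ y : ℝ, HasDerivAt (fun z => χ₁ (z, t))
      (-Complex.I * ζ * χ₁ (y, t)
        + ((R y : ℝ) : ℂ) * Complex.exp (Complex.I * ((θ y : ℝ) : ℂ)) * χ₂ (y, t)) y := by
    intro y
    have hd : DifferentiableAt ℝ (fun z => χ₁ (z, t)) y :=
      ((hχ₁.differentiable h2).comp (differentiable_id.prodMk (differentiable_const t))) y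
    have H := hd.hasDerivAt
    rw [hx₁ y t, hφ y] at H
    exact H
  have hc2xd : ∀ y : ℝ, HasDerivAt (fun z => χ₂ (z, t))
      (-(((R y : ℝ) : ℂ) * Complex.exp (-Complex.I * ((θ y : ℝ) : ℂ))) * χ₁ (y, t)
        + Complex.I * ζ * χ₂ (y, t)) y := by
    intro y
    have hd : DifferentiableAt ℝ (fun z => χ₂ (z, t)) y :=
      ((hχ₂.differentiable h2).comp (differentiable_id.prodMk (differentiable_const t))) y
    have H := hd.hasDerivAt
    rw [hx₂ y t, hconjpt y] at H
    exact H
  -- temporal derivatives of χ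
  have hc1td : HasDerivAt (fun t' => χ₁ (x, t')) (A x * χ₁ (x, t) + B x * χ₂ (x, t)) t := by
    have hd : DifferentiableAt ℝ (fun t' => χ₁ (x, t')) t :=
      ((hχ₁.differentiable h2).comp ((differentiable_const x).prodMk differentiable_id)) t
    have H := hd.hasDerivAt
    rw [ht₁ x t] at H
    exact H
  have hc2td : HasDerivAt (fun t' => χ₂ (x, t')) (C x * χ₁ (x, t) - A x * χ₂ (x, t)) t := by
    have hd : DifferentiableAt ℝ (fun t' => χ₂ (x, t')) t :=
      ((hχ₂.differentiable h2).comp ((differentiable_const x).prodMk differentiable_id)) t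
    have H := hd.hasDerivAt
    rw [ht₂ x t] at H
    exact H
  -- first spatial derivative of u
  have huxd : ∀ y : ℝ, HasDerivAt (fun z => u z t)
      (Complex.exp (-Complex.I * ((θ y : ℝ) : ℂ)) * (-Complex.I * ((c / R y ^ 2 : ℝ) : ℂ)) * (χ₁ (y, t) * χ₁ (y, t)) + Complex.exp (-Complex.I * ((θ y : ℝ) : ℂ)) * (2 * χ₁ (y, t) * (-Complex.I * ζ * χ₁ (y, t) + ((R y : ℝ) : ℂ) * Complex.exp (Complex.I * ((θ y : ℝ) : ℂ)) * χ₂ (y, t))) - (Complex.exp (Complex.I * ((θ y : ℝ) : ℂ)) * (Complex.I * ((c / R y ^ 2 : ℝ) : ℂ)) * (χ₂ (y, t) * χ₂ (y, t)) + Complex.exp (Complex.I * ((θ y : ℝ) : ℂ)) * (2 * χ₂ (y, t) * (-(((R y : ℝ) : ℂ) * Complex.exp (-Complex.I * ((θ y : ℝ) : ℂ))) * χ₁ (y, t) + Complex.I * ζ * χ₂ (y, t))))) y := by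
    intro y
    have hfun : (fun z => u z t) = fun z =>
        Complex.exp (-Complex.I * ((θ z : ℝ) : ℂ)) * (χ₁ (z, t) * χ₁ (z, t))
          - Complex.exp (Complex.I * ((θ z : ℝ) : ℂ)) * (χ₂ (z, t) * χ₂ (z, t)) :=
      funext fun z => by rw [hu z t]; ring
    rw [hfun]
    have H := ((hEmd y).mul ((hc1xd y).mul (hc1xd y))).sub ((hEd y).mul ((hc2xd y).mul (hc2xd y)))
    simp only [Pi.mul_def, Pi.add_def, Pi.sub_def, Pi.neg_def, Pi.div_def, Pi.pow_def] at H
    refine H.congr_deriv ?_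
    ring
  -- first spatial derivative of v
  have hvxd : ∀ y : ℝ, HasDerivAt (fun z => v z t)
      (-Complex.I * (Complex.exp (-Complex.I * ((θ y : ℝ) : ℂ)) * (-Complex.I * ((c / R y ^ 2 : ℝ) : ℂ)) * (χ₁ (y, t) * χ₁ (y, t)) + Complex.exp (-Complex.I * ((θ y : ℝ) : ℂ)) * (2 * χ₁ (y, t) * (-Complex.I * ζ * χ₁ (y, t) + ((R y : ℝ) : ℂ) * Complex.exp (Complex.I * ((θ y : ℝ) : ℂ)) * χ₂ (y, t)))) - Complex.I * (Complex.exp (Complex.I * ((θ y : ℝ) : ℂ)) * (Complex.I * ((c / R y ^ 2 : ℝ) : ℂ)) * (χ₂ (y, t) * χ₂ (y, t)) + Complex.exp (Complex.I * ((θ y : ℝ) : ℂ)) * (2 * χ₂ (y, t) * (-(((R y : ℝ) : ℂ) * Complex.exp (-Complex.I * ((θ y : ℝ) : ℂ))) * χ₁ (y, t) + Complex.I * ζ * χ₂ (y, t))))) y := by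
    intro y
    have hfun : (fun z => v z t) = fun z =>
        -Complex.I * (Complex.exp (-Complex.I * ((θ z : ℝ) : ℂ)) * (χ₁ (z, t) * χ₁ (z, t)))
          - Complex.I * (Complex.exp (Complex.I * ((θ z : ℝ) : ℂ)) * (χ₂ (z, t) * χ₂ (z, t))) :=
      funext fun z => by rw [hv z t]; ring
    rw [hfun]
    have H := (((hEmd y).mul ((hc1xd y).mul (hc1xd y))).const_mul (-Complex.I)).sub
      (((hEd y).mul ((hc2xd y).mul (hc2xd y))).const_mul Complex.I)
    simp only [Pi.mul_def, Pi.add_def, Pi.sub_def, Pi.neg_def, Pi.div_def, Pi.pow_def] at H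
    refine H.congr_deriv ?_
    ring
  -- temporal derivative of u
  have hutd : HasDerivAt (fun t' => u x t')
      (Complex.exp (-Complex.I * ((θ x : ℝ) : ℂ)) * (2 * χ₁ (x, t) * (A x * χ₁ (x, t) + B x * χ₂ (x, t)))
        - Complex.exp (Complex.I * ((θ x : ℝ) : ℂ)) * (2 * χ₂ (x, t) * (C x * χ₁ (x, t) - A x * χ₂ (x, t)))) t := by
    have hfun : (fun t' => u x t') = fun t' =>
        Complex.exp (-Complex.I * ((θ x : ℝ) : ℂ)) * (χ₁ (x, t') * χ₁ (x, t'))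
          - Complex.exp (Complex.I * ((θ x : ℝ) : ℂ)) * (χ₂ (x, t') * χ₂ (x, t')) :=
      funext fun t' => by rw [hu x t']; ring
    rw [hfun]
    have H := ((hc1td.mul hc1td).const_mul (Complex.exp (-Complex.I * ((θ x : ℝ) : ℂ)))).sub
      ((hc2td.mul hc2td).const_mul (Complex.exp (Complex.I * ((θ x : ℝ) : ℂ))))
    simp only [Pi.mul_def, Pi.add_def, Pi.sub_def, Pi.neg_def, Pi.div_def, Pi.pow_def] at H
    refine H.congr_deriv ?_
    ring
  -- temporal derivative of v
  have hvtd : HasDerivAt (fun t' => v x t')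
      (-Complex.I * (Complex.exp (-Complex.I * ((θ x : ℝ) : ℂ)) * (2 * χ₁ (x, t) * (A x * χ₁ (x, t) + B x * χ₂ (x, t))))
        - Complex.I * (Complex.exp (Complex.I * ((θ x : ℝ) : ℂ)) * (2 * χ₂ (x, t) * (C x * χ₁ (x, t) - A x * χ₂ (x, t))))) t := by
    have hfun : (fun t' => v x t') = fun t' =>
        -Complex.I * (Complex.exp (-Complex.I * ((θ x : ℝ) : ℂ)) * (χ₁ (x, t') * χ₁ (x, t')))
          - Complex.I * (Complex.exp (Complex.I * ((θ x : ℝ) : ℂ)) * (χ₂ (x, t') * χ₂ (x, t'))) :=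
      funext fun t' => by rw [hv x t']; ring
    rw [hfun]
    have H := (((hc1td.mul hc1td).const_mul (Complex.exp (-Complex.I * ((θ x : ℝ) : ℂ)))).const_mul (-Complex.I)).sub
      (((hc2td.mul hc2td).const_mul (Complex.exp (Complex.I * ((θ x : ℝ) : ℂ)))).const_mul Complex.I)
    simp only [Pi.mul_def, Pi.add_def, Pi.sub_def, Pi.neg_def, Pi.div_def, Pi.pow_def] at H
    refine H.congr_deriv ?_
    ring
  -- second spatial derivative of u
  have h2ud : HasDerivAt (fun y : ℝ => Complex.exp (-Complex.I * ((θ y : ℝ) : ℂ)) * (-Complex.I * ((c / R y ^ 2 : ℝ) : ℂ)) * (χ₁ (y, t) * χ₁ (y, t)) + Complex.exp (-Complex.I * ((θ y : ℝ) : ℂ)) * (2 * χ₁ (y, t) * (-Complex.I * ζ * χ₁ (y, t) + ((R y : ℝ) : ℂ) * Complex.exp (Complex.I * ((θ y : ℝ) : ℂ)) * χ₂ (y, t))) - (Complex.exp (Complex.I * ((θ y : ℝ) : ℂ)) * (Complex.I * ((c / R y ^ 2 : ℝ) : ℂ)) * (χ₂ (y, t) * χ₂ (y, t)) + Complex.exp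 (Complex.I * ((θ y : ℝ) : ℂ)) * (2 * χ₂ (y, t) * (-(((R y : ℝ) : ℂ) * Complex.exp (-Complex.I * ((θ y : ℝ) : ℂ))) * χ₁ (y, t) + Complex.I * ζ * χ₂ (y, t)))))
      (((Complex.exp (-Complex.I * ((θ x : ℝ) : ℂ)) * (-Complex.I * ((c / R x ^ 2 : ℝ) : ℂ))) * (-Complex.I * ((c / R x ^ 2 : ℝ) : ℂ)) + Complex.exp (-Complex.I * ((θ x : ℝ) : ℂ)) * (-Complex.I * ((-(2 * c * deriv R x) / R x ^ 3 : ℝ) : ℂ))) * (χ₁ (x, t) * χ₁ (x, t)) + Complex.exp (-Complex.I * ((θ x : ℝ) : ℂ)) * (-Complex.I * ((c / R x ^ 2 : ℝ) : ℂ)) * (2 * χ₁ (x, t) * (-Complex.I * ζ * χ₁ (x, t) + ((R x : ℝ) : ℂ) * Complex.exp (Complex.I * ((θ x : ℝ) : ℂ)) * χ₂ (x, t))) + ((Complex.exp (-Complex.I * ((θ x : ℝ) : ℂ)) * (-Complex.I * ((c / R x ^ 2 : ℝ) : ℂ))) * (2 * χ₁ (x, t) * (-Complex.I * ζ * χ₁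 (x, t) + ((R x : ℝ) : ℂ) * Complex.exp (Complex.I * ((θ x : ℝ) : ℂ)) * χ₂ (x, t))) + Complex.exp (-Complex.I * ((θ x : ℝ) : ℂ)) * (2 * (-Complex.I * ζ * χ₁ (x, t) + ((R x : ℝ) : ℂ) * Complex.exp (Complex.I * ((θ x : ℝ) : ℂ)) * χ₂ (x, t)) * (-Complex.I * ζ * χ₁ (x, t) + ((R x : ℝ) : ℂ) * Complex.exp (Complex.I * ((θ x : ℝ) : ℂ)) * χ₂ (x, t)) + 2 * χ₁ (x, t) * (-Complex.I * ζ * (-Complex.I * ζ * χ₁ (x, t) + ((R x : ℝ) : ℂ) * Complex.exp (Complex.I * ((θ x : ℝ) : ℂ)) * χ₂ (x, t)) + ((deriv R x : ℝ) : ℂ) * Complex.exp (Complex.I * ((θ x : ℝ) : ℂ)) * χ₂ (x, t) + ((R x : ℝ) : ℂ) * (Complex.exp (Complex.I * ((θ x : ℝ) : ℂ)) * (Complex.I * ((c / R x ^ 2 : ℝ) : ℂ))) * χ₂ (x, t) + ((R x : ℝ) : ℂ) * Complex.exp (Complex.I * ((θ x : ℝ) : ℂ)) * (-(((R x : ℝ)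 : ℂ) * Complex.exp (-Complex.I * ((θ x : ℝ) : ℂ))) * χ₁ (x, t) + Complex.I * ζ * χ₂ (x, t))))) - (((Complex.exp (Complex.I * ((θ x : ℝ) : ℂ)) * (Complex.I * ((c / R x ^ 2 : ℝ) : ℂ))) * (Complex.I * ((c / R x ^ 2 : ℝ) : ℂ)) + Complex.exp (Complex.I * ((θ x : ℝ) : ℂ)) * (Complex.I * ((-(2 * c * deriv R x) / R x ^ 3 : ℝ) : ℂ))) * (χ₂ (x, t) * χ₂ (x, t)) + Complex.exp (Complex.I * ((θ x : ℝ) : ℂ)) * (Complex.I * ((c / R x ^ 2 : ℝ) : ℂ)) * (2 * χ₂ (x, t) * (-(((R x : ℝ) : ℂ) * Complex.exp (-Complex.I * ((θ x : ℝ) : ℂ))) * χ₁ (x, t) + Complex.I * ζ * χ₂ (x, t))) + ((Complex.exp (Complex.I * ((θ x : ℝ) : ℂ)) * (Complex.I * ((c / R x ^ 2 : ℝ) : ℂ))) * (2 * χ₂ (x, t) * (-(((R x : ℝ) : ℂ) * Complex.exp (-Complex.I * ((θ x : ℝ) : ℂ))) * χ₁ (x, t) + Complex.I * ζ * χ₂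 (x, t))) + Complex.exp (Complex.I * ((θ x : ℝ) : ℂ)) * (2 * (-(((R x : ℝ) : ℂ) * Complex.exp (-Complex.I * ((θ x : ℝ) : ℂ))) * χ₁ (x, t) + Complex.I * ζ * χ₂ (x, t)) * (-(((R x : ℝ) : ℂ) * Complex.exp (-Complex.I * ((θ x : ℝ) : ℂ))) * χ₁ (x, t) + Complex.I * ζ * χ₂ (x, t)) + 2 * χ₂ (x, t) * (-(((deriv R x : ℝ) : ℂ) * Complex.exp (-Complex.I * ((θ x : ℝ) : ℂ)) + ((R x : ℝ) : ℂ) * (Complex.exp (-Complex.I * ((θ x : ℝ) : ℂ)) * (-Complex.I * ((c / R x ^ 2 : ℝ) : ℂ)))) * χ₁ (x, t) - ((R x : ℝ) : ℂ) * Complex.exp (-Complex.I * ((θ x : ℝ) : ℂ)) * (-Complex.I * ζ * χ₁ (x, t) + ((R x : ℝ) : ℂ) * Complex.exp (Complex.I * ((θ x : ℝ) : ℂ)) * χ₂ (x, t)) + Complex.I * ζ * (-(((R x : ℝ) : ℂ) * Complex.exp (-Complex.I * ((θ x : ℝ) : ℂ))) * χ₁ (x, t) + Complex.I * ζ * χ₂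 (x, t))))))) x := by
    have H := (((((hEmd x).mul ((hTd x).const_mul (-Complex.I))).mul ((hc1xd x).mul (hc1xd x))).add ((hEmd x).mul (((hc1xd x).const_mul 2).mul (((hc1xd x).const_mul (-Complex.I * ζ)).add (((hRC x).mul (hEd x)).mul (hc2xd x)))))).sub ((((hEd x).mul ((hTd x).const_mul Complex.I)).mul ((hc2xd x).mul (hc2xd x))).add ((hEd x).mul (((hc2xd x).const_mul 2).mul ((((hRC x).mul (hEmd x)).neg.mul (hc1xd x)).add ((hc2xd x).const_mul (Complex.I * ζ)))))))
    simp only [Pi.mul_def, Pi.add_def, Pi.sub_def, Pi.neg_def, Pi.div_def, Pi.pow_def] at H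
    refine H.congr_deriv ?_
    have hRx := hR0 x
    push_cast
    field_simp
    ring
  -- second spatial derivative of v
  have h2vd : HasDerivAt (fun y : ℝ => -Complex.I * (Complex.exp (-Complex.I * ((θ y : ℝ) : ℂ)) * (-Complex.I * ((c / R y ^ 2 : ℝ) : ℂ)) * (χ₁ (y, t) * χ₁ (y, t)) + Complex.exp (-Complex.I * ((θ y : ℝ) : ℂ)) * (2 * χ₁ (y, t) * (-Complex.I * ζ * χ₁ (y, t) + ((R y : ℝ) : ℂ) * Complex.exp (Complex.I * ((θ y : ℝ) : ℂ)) * χ₂ (y, t)))) - Complex.I * (Complex.exp (Complex.I * ((θ y : ℝ) : ℂ)) * (Complex.I * ((c / R y ^ 2 : ℝ) : ℂ)) * (χ₂ (y, t) * χ₂ (y, t)) + Complex.exp (Complex.I * ((θ y : ℝ) : ℂ)) * (2 * χ₂ (y, t) * (-(((R y : ℝ) : ℂ) * Complex.exp (-Complex.I * ((θ y : ℝ) : ℂ))) * χ₁ (y, t) + Complex.I * ζ * χ₂ (y, t)))))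
      (-Complex.I * (((Complex.exp (-Complex.I * ((θ x : ℝ) : ℂ)) * (-Complex.I * ((c / R x ^ 2 : ℝ) : ℂ))) * (-Complex.I * ((c / R x ^ 2 : ℝ) : ℂ)) + Complex.exp (-Complex.I * ((θ x : ℝ) : ℂ)) * (-Complex.I * ((-(2 * c * deriv R x) / R x ^ 3 : ℝ) : ℂ))) * (χ₁ (x, t) * χ₁ (x, t)) + Complex.exp (-Complex.I * ((θ x : ℝ) : ℂ)) * (-Complex.I * ((c / R x ^ 2 : ℝ) : ℂ)) * (2 * χ₁ (x, t) * (-Complex.I * ζ * χ₁ (x, t) + ((R x : ℝ) : ℂ) * Complex.exp (Complex.I * ((θ x : ℝ) : ℂ)) * χ₂ (x, t))) + ((Complex.exp (-Complex.I * ((θ x : ℝ) : ℂ)) * (-Complex.I * ((c / R x ^ 2 : ℝ) : ℂ))) * (2 * χ₁ (x, t) * (-Complex.I * ζ * χ₁ (x, t) + ((R x : ℝ) : ℂ) * Complex.exp (Complex.I * ((θ x : ℝ) : ℂ)) * χ₂ (x, t))) + Complex.exp (-Complex.I * ((θ x : ℝ) : ℂ)) * (2 * (-Complex.I * ζ * χ₁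 (x, t) + ((R x : ℝ) : ℂ) * Complex.exp (Complex.I * ((θ x : ℝ) : ℂ)) * χ₂ (x, t)) * (-Complex.I * ζ * χ₁ (x, t) + ((R x : ℝ) : ℂ) * Complex.exp (Complex.I * ((θ x : ℝ) : ℂ)) * χ₂ (x, t)) + 2 * χ₁ (x, t) * (-Complex.I * ζ * (-Complex.I * ζ * χ₁ (x, t) + ((R x : ℝ) : ℂ) * Complex.exp (Complex.I * ((θ x : ℝ) : ℂ)) * χ₂ (x, t)) + ((deriv R x : ℝ) : ℂ) * Complex.exp (Complex.I * ((θ x : ℝ) : ℂ)) * χ₂ (x, t) + ((R x : ℝ) : ℂ) * (Complex.exp (Complex.I * ((θ x : ℝ) : ℂ)) * (Complex.I * ((c / R x ^ 2 : ℝ) : ℂ))) * χ₂ (x, t) + ((R x : ℝ) : ℂ) * Complex.exp (Complex.I * ((θ x : ℝ) : ℂ)) * (-(((R x : ℝ) : ℂ) * Complex.exp (-Complex.I * ((θ x : ℝ) : ℂ))) * χ₁ (x, t) + Complex.I * ζ * χ₂ (x, t)))))) - Complex.I * (((Complex.exp (Complex.I * ((θ x : ℝ) : ℂ)) * (Complex.I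 * ((c / R x ^ 2 : ℝ) : ℂ))) * (Complex.I * ((c / R x ^ 2 : ℝ) : ℂ)) + Complex.exp (Complex.I * ((θ x : ℝ) : ℂ)) * (Complex.I * ((-(2 * c * deriv R x) / R x ^ 3 : ℝ) : ℂ))) * (χ₂ (x, t) * χ₂ (x, t)) + Complex.exp (Complex.I * ((θ x : ℝ) : ℂ)) * (Complex.I * ((c / R x ^ 2 : ℝ) : ℂ)) * (2 * χ₂ (x, t) * (-(((R x : ℝ) : ℂ) * Complex.exp (-Complex.I * ((θ x : ℝ) : ℂ))) * χ₁ (x, t) + Complex.I * ζ * χ₂ (x, t))) + ((Complex.exp (Complex.I * ((θ x : ℝ) : ℂ)) * (Complex.I * ((c / R x ^ 2 : ℝ) : ℂ))) * (2 * χ₂ (x, t) * (-(((R x : ℝ) : ℂ) * Complex.exp (-Complex.I * ((θ x : ℝ) : ℂ))) * χ₁ (x, t) + Complex.I * ζ * χ₂ (x, t))) + Complex.exp (Complex.I * ((θ x : ℝ) : ℂ)) * (2 * (-(((R x : ℝ) : ℂ) * Complex.exp (-Complex.I * ((θ x : ℝ) : ℂ))) * χ₁ (x, t) + Complex.I * ζ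 * χ₂ (x, t)) * (-(((R x : ℝ) : ℂ) * Complex.exp (-Complex.I * ((θ x : ℝ) : ℂ))) * χ₁ (x, t) + Complex.I * ζ * χ₂ (x, t)) + 2 * χ₂ (x, t) * (-(((deriv R x : ℝ) : ℂ) * Complex.exp (-Complex.I * ((θ x : ℝ) : ℂ)) + ((R x : ℝ) : ℂ) * (Complex.exp (-Complex.I * ((θ x : ℝ) : ℂ)) * (-Complex.I * ((c / R x ^ 2 : ℝ) : ℂ)))) * χ₁ (x, t) - ((R x : ℝ) : ℂ) * Complex.exp (-Complex.I * ((θ x : ℝ) : ℂ)) * (-Complex.I * ζ * χ₁ (x, t) + ((R x : ℝ) : ℂ) * Complex.exp (Complex.I * ((θ x : ℝ) : ℂ)) * χ₂ (x, t)) + Complex.I * ζ * (-(((R x : ℝ) : ℂ) * Complex.exp (-Complex.I * ((θ x : ℝ) : ℂ))) * χ₁ (x, t) + Complex.I * ζ * χ₂ (x, t))))))) x := by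
    have H := ((((((hEmd x).mul ((hTd x).const_mul (-Complex.I))).mul ((hc1xd x).mul (hc1xd x))).add ((hEmd x).mul (((hc1xd x).const_mul 2).mul (((hc1xd x).const_mul (-Complex.I * ζ)).add (((hRC x).mul (hEd x)).mul (hc2xd x)))))).const_mul (-Complex.I)).sub (((((hEd x).mul ((hTd x).const_mul Complex.I)).mul ((hc2xd x).mul (hc2xd x))).add ((hEd x).mul (((hc2xd x).const_mul 2).mul ((((hRC x).mul (hEmd x)).neg.mul (hc1xd x)).add ((hc2xd x).const_mul (Complex.I * ζ)))))).const_mul Complex.I))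
    simp only [Pi.mul_def, Pi.add_def, Pi.sub_def, Pi.neg_def, Pi.div_def, Pi.pow_def] at H
    refine H.congr_deriv ?_
    have hRx := hR0 x
    push_cast
    field_simp
    ring
  have e2u : (deriv fun y => u y t) = fun y => Complex.exp (-Complex.I * ((θ y : ℝ) : ℂ)) * (-Complex.I * ((c / R y ^ 2 : ℝ) : ℂ)) * (χ₁ (y, t) * χ₁ (y, t)) + Complex.exp (-Complex.I * ((θ y : ℝ) : ℂ)) * (2 * χ₁ (y, t) * (-Complex.I * ζ * χ₁ (y, t) + ((R y : ℝ) : ℂ) * Complex.exp (Complex.I * ((θ y : ℝ) : ℂ)) * χ₂ (y, t))) - (Complex.exp (Complex.I * ((θ y : ℝ) : ℂ)) * (Complex.I * ((c / R y ^ 2 : ℝ) : ℂ)) * (χ₂ (y, t) * χ₂ (y, t)) + Complex.exp (Complex.I * ((θ y : ℝ) : ℂ)) * (2 * χ₂ (y, t) * (-(((R y : ℝ) : ℂ) * Complex.exp (-Complex.I * ((θ y : ℝ) : ℂ))) * χ₁ (y, t) + Complex.I * ζ * χ₂ (y, t)))) :=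
    funext fun y => (huxd y).deriv
  have e2v : (deriv fun y => v y t) = fun y => -Complex.I * (Complex.exp (-Complex.I * ((θ y : ℝ) : ℂ)) * (-Complex.I * ((c / R y ^ 2 : ℝ) : ℂ)) * (χ₁ (y, t) * χ₁ (y, t)) + Complex.exp (-Complex.I * ((θ y : ℝ) : ℂ)) * (2 * χ₁ (y, t) * (-Complex.I * ζ * χ₁ (y, t) + ((R y : ℝ) : ℂ) * Complex.exp (Complex.I * ((θ y : ℝ) : ℂ)) * χ₂ (y, t)))) - Complex.I * (Complex.exp (Complex.I * ((θ y : ℝ) : ℂ)) * (Complex.I * ((c / R y ^ 2 : ℝ) : ℂ)) * (χ₂ (y, t) * χ₂ (y, t)) + Complex.exp (Complex.I * ((θ y : ℝ) : ℂ)) * (2 * χ₂ (y, t) * (-(((R y : ℝ) : ℂ) * Complex.exp (-Complex.I * ((θ y : ℝ) : ℂ))) * χ₁ (y, t) + Complex.I * ζ * χ₂ (y, t)))) :=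
    funext fun y => (hvxd y).deriv
  have hE0 : Complex.exp (Complex.I * ((θ x : ℝ) : ℂ)) ≠ 0 := Complex.exp_ne_zero _
  have hRx : ((R x : ℝ) : ℂ) ≠ 0 := hR0 x
  have hef : Complex.exp (Complex.I * ((θ x : ℝ) : ℂ)) * Complex.exp (-Complex.I * ((θ x : ℝ) : ℂ)) = 1 := by
    rw [← Complex.exp_add,
      show Complex.I * ((θ x : ℝ) : ℂ) + -Complex.I * ((θ x : ℝ) : ℂ) = 0 by ring,
      Complex.exp_zero]
  have hTpKey : ((-(2 * c * deriv R x) / R x ^ 3 : ℝ) : ℂ) * ((R x : ℝ) : ℂ)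
      = -(2 * (((c / R x ^ 2 : ℝ) : ℂ) * ((deriv R x : ℝ) : ℂ))) := by
    have hx0 := hR0r x
    push_cast
    field_simp
  have hS2Key : ((c * deriv R x / R x ^ 3 : ℝ) : ℂ) * ((R x : ℝ) : ℂ)
      = ((c / R x ^ 2 : ℝ) : ℂ) * ((deriv R x : ℝ) : ℂ) := by
    have hx0 := hR0r x
    push_cast
    field_simp
  have hS4Key : 2 * ((c ^ 2 / (2 * R x ^ 4) : ℝ) : ℂ)
      = ((c / R x ^ 2 : ℝ) : ℂ) * ((c / R x ^ 2 : ℝ) : ℂ) := by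
    have hx0 := hR0r x
    push_cast
    field_simp
  constructor
  · rw [hutd.deriv, (huxd x).deriv, hu x t, hv x t]
    simp only [e2v]
    rw [h2vd.deriv]
    rw [hA x, hB x, hC x, habs x, hφd.deriv, hφcd.deriv, hconjpt x, hφ x]
    linear_combination (sq_eig_key Complex.I
      (Complex.exp (Complex.I * ((θ x : ℝ) : ℂ))) (Complex.exp (-Complex.I * ((θ x : ℝ) : ℂ)))
      ((R x : ℝ) : ℂ) ((deriv R x : ℝ) : ℂ) ((c / R x ^ 2 : ℝ) : ℂ)
      ((-(2 * c * deriv R x) / R x ^ 3 : ℝ) : ℂ) ((c * deriv R x / R x ^ 3 : ℝ) : ℂ)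
      ((c ^ 2 / (2 * R x ^ 4) : ℝ) : ℂ) ((ω : ℝ) : ℂ) ζ (χ₁ (x, t)) (χ₂ (x, t))
      Complex.I_mul_I hef hTpKey hS2Key hS4Key hRx hE0).1
  · rw [hvtd.deriv, (hvxd x).deriv, hu x t, hv x t]
    simp only [e2u]
    rw [h2ud.deriv]
    rw [hA x, hB x, hC x, habs x, hφd.deriv, hφcd.deriv, hconjpt x, hφ x]
    linear_combination (sq_eig_key Complex.I
      (Complex.exp (Complex.I * ((θ x : ℝ) : ℂ))) (Complex.exp (-Complex.I * ((θ x : ℝ) : ℂ)))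
      ((R x : ℝ) : ℂ) ((deriv R x : ℝ) : ℂ) ((c / R x ^ 2 : ℝ) : ℂ)
      ((-(2 * c * deriv R x) / R x ^ 3 : ℝ) : ℂ) ((c * deriv R x / R x ^ 3 : ℝ) : ℂ)
      ((c ^ 2 / (2 * R x ^ 4) : ℝ) : ℂ) ((ω : ℝ) : ℂ) ζ (χ₁ (x, t)) (χ₂ (x, t))
      Complex.I_mul_I hef hTpKey hS2Key hS4Key hRx hE0).2
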